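/- Let G be cyclic of order p, k a field of characteristic p, V and W kG-modules with W indecomposable of dimension n with basis w_1,…,w_n on which σ·w_i = Σ_{j=1}^{i} (-1)^{i-j} w_j. If f ∈ k[V] has weight d ≤ n (i.e., d is the smallest positive integer with Δ^d(f) = 0), then Σ_{j=1}^{d} Δ^{j-1}(f) ⊗ w_j is a G-invariant element of k[V] ⊗ W. -/

import Mathlib

open MvPolynomial TensorProduct

/-- Index type for the variables of `k[V]` where `V = ⊕_{j<m} V_{nj j}`. -/
abbrev Idx (m : ℕ) (nj : Fin m → ℕ) := Σ j : Fin m, Fin (nj j)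

/-- The action of the generator σ on `k[V]`:
`σ (x_{i,j}) = x_{i,j} + x_{i+1,j}` (and `σ` fixes the last variable of each block). -/
noncomputable def sigmaAct (k : Type*) [CommRing k] {m : ℕ} (nj : Fin m → ℕ) :
    MvPolynomial (Idx m nj) k →ₐ[k] MvPolynomial (Idx m nj) k :=
  aeval (fun v => X v + if h : v.2.1 + 1 < nj v.1 then X ⟨v.1, ⟨v.2.1 + 1, h⟩⟩ else 0)

/-- Δ = σ - 1 as a `k`-linear endomorphism of `k[V]`. -/
noncomputable def Del (k : Type*) [CommRing k] {m : ℕ} (nj : Fin m → ℕ) :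
    MvPolynomial (Idx m nj) k →ₗ[k] MvPolynomial (Idx m nj) k :=
  (sigmaAct k nj).toLinearMap - LinearMap.id

/-- The ring of invariants `k[V]^G` (fixed points of the generator σ). -/
noncomputable def invar (k : Type*) [CommRing k] {m : ℕ} (nj : Fin m → ℕ) :
    Subalgebra k (MvPolynomial (Idx m nj) k) :=
  AlgHom.equalizer (sigmaAct k nj) (AlgHom.id k _)

/-- Matrix of σ on the indecomposable module `W = V_n` in the basis `w_1,…,w_n`,
with `σ • w_i = ∑_{j ≤ i} (-1)^{i-j} w_j`. -/
def sigmaWMat (k : Type*) [CommRing k] (n : ℕ) : Matrix (Fin n) (Fin n) k :=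
  fun a b => if a ≤ b then (-1 : k) ^ ((b : ℕ) - (a : ℕ)) else 0

/-- σ acting on `W = V_n`. -/
noncomputable def sigmaW (k : Type*) [CommRing k] (n : ℕ) : (Fin n → k) →ₗ[k] (Fin n → k) :=
  Matrix.toLin' (sigmaWMat k n)

/-- σ acting diagonally on `k[V] ⊗ W`. -/
noncomputable def sigmaCov (k : Type*) [CommRing k] {m : ℕ} (nj : Fin m → ℕ) (n : ℕ) :
    (MvPolynomial (Idx m nj) k ⊗[k] (Fin n → k)) →ₗ[k]
      (MvPolynomial (Idx m nj) k ⊗[k] (Fin n → k)) :=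
  TensorProduct.map (sigmaAct k nj).toLinearMap (sigmaW k n)

/-- A covariant is a `G`-invariant element of `k[V] ⊗ W`. -/
def IsCovariant (k : Type*) [CommRing k] {m : ℕ} (nj : Fin m → ℕ) {n : ℕ}
    (h : MvPolynomial (Idx m nj) k ⊗[k] (Fin n → k)) : Prop :=
  sigmaCov k nj n h = h

/-- Elements of `k[V] ⊗ W` which are homogeneous of degree `d`. -/
def tensorHomog (k : Type*) [CommRing k] {m : ℕ} (nj : Fin m → ℕ) (n : ℕ) (d : ℕ) :
    Set (MvPolynomial (Idx m nj) k ⊗[k] (Fin n → k)) :=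
  {x | x ∈ Submodule.span k
    {y | ∃ f w, MvPolynomial.IsHomogeneous f d ∧ y = f ⊗ₜ[k] w}}


/-- `h` is decomposable: it lies in `k[V]^G_+ ⋅ (k[V] ⊗ W)^G`. -/
def IsDecomposableCov (k : Type*) [CommRing k] {m : ℕ} (nj : Fin m → ℕ) (n : ℕ)
    (h : MvPolynomial (Idx m nj) k ⊗[k] (Fin n → k)) : Prop :=
  h ∈ Submodule.span k
    {y | ∃ q x, q ∈ invar k nj ∧ (∃ e, 0 < e ∧ MvPolynomial.IsHomogeneous q e) ∧
      IsCovariant k nj x ∧ y = q • x}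

/-- A transfer covariant: `Δ^k(f) w_1 + Δ^{k+1}(f) w_2 + ⋯ + Δ^{p-1}(f) w_s`. -/
noncomputable def transferCov (k : Type*) [CommRing k] {m : ℕ} (nj : Fin m → ℕ) (n : ℕ)
    (p s : ℕ) (f : MvPolynomial (Idx m nj) k) :
    MvPolynomial (Idx m nj) k ⊗[k] (Fin n → k) :=
  ∑ i : Fin n, (if (i : ℕ) < s then ((Del k nj) ^ (p - s + (i : ℕ))) f else 0) ⊗ₜ[k]
    Pi.single i 1

def IsTransferCovariant (k : Type*) [CommRing k] {m : ℕ} (nj : Fin m → ℕ) (n : ℕ) (p : ℕ)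
    (h : MvPolynomial (Idx m nj) k ⊗[k] (Fin n → k)) : Prop :=
  ∃ f s, 0 < s ∧ s ≤ n ∧ s ≤ p ∧ h = transferCov k nj n p s f

/-- The module of covariants is generated over `k[V]^G` in degrees ≤ d. -/
def CovGenLE (k : Type*) [CommRing k] {m : ℕ} (nj : Fin m → ℕ) (n : ℕ) (d : ℕ) : Prop :=
  ∀ x, IsCovariant k nj x → x ∈ Submodule.span k
    {y | ∃ q z, q ∈ invar k nj ∧ IsCovariant k nj z ∧
      (∃ e ≤ d, z ∈ tensorHomog k nj n e) ∧ y = q • z}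

/-- `k[V]` is generated as a `k[V]^G`-module in degrees ≤ d. -/
def PolyGenLE (k : Type*) [CommRing k] {m : ℕ} (nj : Fin m → ℕ) (d : ℕ) : Prop :=
  ∀ f : MvPolynomial (Idx m nj) k, f ∈ Submodule.span k
    {y | ∃ q g, q ∈ invar k nj ∧ (∃ e ≤ d, MvPolynomial.IsHomogeneous g e) ∧ y = q * g}

/-- `k[V]^G` is generated as a `k`-algebra in degrees ≤ d. -/
def AlgGenLE (k : Type*) [CommRing k] {m : ℕ} (nj : Fin m → ℕ) (d : ℕ) : Prop :=
  ∀ f ∈ invar k nj, f ∈ Algebra.adjoin k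
    {g | g ∈ invar k nj ∧ ∃ e ≤ d, MvPolynomial.IsHomogeneous g e}

/-- Noether bound of the module of covariants over `k[V]^G`. -/
noncomputable def betaCov (k : Type*) [CommRing k] {m : ℕ} (nj : Fin m → ℕ) (n : ℕ) : ℕ :=
  sInf {d | CovGenLE k nj n d}

noncomputable def betaPolyMod (k : Type*) [CommRing k] {m : ℕ} (nj : Fin m → ℕ) : ℕ :=
  sInf {d | PolyGenLE k nj d}

noncomputable def betaAlg (k : Type*) [CommRing k] {m : ℕ} (nj : Fin m → ℕ) : ℕ :=
  sInf {d | AlgGenLE k nj d}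

/-- The norm `N_j = ∏_{i=0}^{p-1} σ^i (x_{1,j})`. -/
noncomputable def normJ (k : Type*) [CommRing k] {m : ℕ} (nj : Fin m → ℕ) (p : ℕ)
    (j : Fin m) (h0 : 0 < nj j) : MvPolynomial (Idx m nj) k :=
  ∏ i ∈ Finset.range p, (sigmaAct k nj)^[i] (X ⟨j, ⟨0, h0⟩⟩)


/-- Elmer, Prop. 3, first half. If `f ∈ k[V]` has weight `d ≤ n`
(i.e. `d` is the smallest positive integer with `Δ^d f = 0`), then
`∑_{j=1}^d Δ^{j-1}(f) ⊗ w_j` is a `G`-invariant element of `k[V] ⊗ W`. -/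
theorem stmt3 (p : ℕ) (hp : p.Prime) (k : Type*) [Field k] [CharP k p]
    {m : ℕ} (nj : Fin m → ℕ) (hnj : ∀ j, 1 ≤ nj j ∧ nj j ≤ p)
    (n : ℕ) (hn : 1 ≤ n) (hnp : n ≤ p)
    (f : MvPolynomial (Idx m nj) k) (d : ℕ) (hd0 : 0 < d)
    (hdker : ((Del k nj) ^ d) f = 0)
    (hdmin : ∀ e, 0 < e → ((Del k nj) ^ e) f = 0 → d ≤ e)
    (hdn : d ≤ n) :
    IsCovariant k nj
      (∑ i : Fin n,
        (if (i : ℕ) < d then ((Del k nj) ^ (i : ℕ)) f else 0) ⊗ₜ[k]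
          (Pi.single i 1 : Fin n → k)) := by
  classical
  set g : Fin n → MvPolynomial (Idx m nj) k :=
    fun i => if (i : ℕ) < d then ((Del k nj) ^ (i : ℕ)) f else 0 with hg
  have hsigma : ∀ q : MvPolynomial (Idx m nj) k,
      sigmaAct k nj q = q + Del k nj q := by
    intro q
    simp [Del, LinearMap.sub_apply]
  have hW : ∀ i : Fin n, sigmaW k n (Pi.single i 1) =
      ∑ a : Fin n, (sigmaWMat k n a i) • (Pi.single a (1 : k) : Fin n → k) := by
    intro i
    ext a
    simp [sigmaW, Matrix.toLin'_apply, Matrix.mulVec, dotProduct,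
      Pi.single_apply, mul_ite]
  unfold IsCovariant sigmaCov
  rw [map_sum]
  have step : ∀ i : Fin n,
      TensorProduct.map (sigmaAct k nj).toLinearMap (sigmaW k n)
        (g i ⊗ₜ[k] (Pi.single i 1 : Fin n → k)) =
      ∑ a : Fin n, (sigmaWMat k n a i • sigmaAct k nj (g i)) ⊗ₜ[k]
        (Pi.single a (1 : k) : Fin n → k) := by
    intro i
    rw [TensorProduct.map_tmul]
    rw [hW i, TensorProduct.tmul_sum]
    refine Finset.sum_congr rfl fun a _ => ?_
    rw [TensorProduct.tmul_smul, TensorProduct.smul_tmul']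
    rfl
  change ∑ x : Fin n, TensorProduct.map (sigmaAct k nj).toLinearMap (sigmaW k n) (g x ⊗ₜ[k] (Pi.single x 1 : Fin n → k)) = ∑ i : Fin n, g i ⊗ₜ[k] (Pi.single i 1 : Fin n → k)
  simp only [step]
  rw [Finset.sum_comm]
  have key : ∀ a : Fin n,
      (∑ i : Fin n, sigmaWMat k n a i • sigmaAct k nj (g i)) = g a := by
    intro a
    have hterm : ∀ i : Fin n, sigmaWMat k n a i • sigmaAct k nj (g i) =
        (fun j : ℕ => if (a : ℕ) ≤ j ∧ j < d then
          ((-1 : k) ^ (j - (a : ℕ))) •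
            (((Del k nj) ^ (j : ℕ)) f + ((Del k nj) ^ ((j : ℕ) + 1)) f)
          else 0) (i : ℕ) := by
      intro i
      by_cases h1 : (a : ℕ) ≤ (i : ℕ)
      · by_cases h2 : (i : ℕ) < d
        · have : sigmaAct k nj (g i) =
              ((Del k nj) ^ (i : ℕ)) f + ((Del k nj) ^ ((i : ℕ) + 1)) f := by
            rw [hg]
            simp only [h2, if_true]
            rw [hsigma]
            congr 1
            rw [pow_succ', Module.End.mul_apply]
          have hle : a ≤ i := by exact_mod_cast Fin.le_def.mpr h1
          simp only [this, sigmaWMat]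
          rw [if_pos hle, if_pos ⟨h1, h2⟩]
        · simp [hg, sigmaWMat, h2, map_zero]
      · have hle : ¬ a ≤ i := fun hc => h1 (Fin.le_def.mp hc)
        simp [sigmaWMat, hle, h1]
    calc (∑ i : Fin n, sigmaWMat k n a i • sigmaAct k nj (g i))
        = ∑ j ∈ Finset.range n, (fun j : ℕ => if (a : ℕ) ≤ j ∧ j < d then
            ((-1 : k) ^ (j - (a : ℕ))) •
              (((Del k nj) ^ j) f + ((Del k nj) ^ (j + 1)) f)
            else 0) j := by
          rw [← Fin.sum_univ_eq_sum_range]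
          exact Finset.sum_congr rfl fun i _ => hterm i
      _ = ∑ j ∈ Finset.Ico (a : ℕ) d, ((-1 : k) ^ (j - (a : ℕ))) •
            (((Del k nj) ^ j) f + ((Del k nj) ^ (j + 1)) f) := by
          rw [← Finset.sum_subset (s₁ := Finset.Ico (a : ℕ) d)
            (s₂ := Finset.range n)]
          · refine Finset.sum_congr rfl fun j hj => ?_
            rw [Finset.mem_Ico] at hj
            simp [hj.1, hj.2]
          · intro j hj
            rw [Finset.mem_Ico] at hj
            exact Finset.mem_range.mpr (lt_of_lt_of_le hj.2 hdn)
          · intro j _ hj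
            rw [Finset.mem_Ico, not_and_or, not_le, not_lt] at hj
            rcases hj with h | h
            · simp [Nat.not_le.mpr h]
            · simp [Nat.not_lt.mpr h]
      _ = g a := by
          set F : ℕ → MvPolynomial (Idx m nj) k :=
            fun j => ((-1 : k) ^ j) • ((Del k nj) ^ (j + (a : ℕ))) f with hF
          rw [Finset.sum_Ico_eq_sum_range]
          by_cases had : (a : ℕ) < d
          · have : ∀ j ∈ Finset.range (d - (a : ℕ)),
                ((-1 : k) ^ ((a : ℕ) + j - (a : ℕ))) •
                  (((Del k nj) ^ ((a : ℕ) + j)) f +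
                    ((Del k nj) ^ ((a : ℕ) + j + 1)) f)
                = F j - F (j + 1) := by
              intro j _
              rw [hF]
              simp only [Nat.add_sub_cancel_left]
              have e1 : j + (a : ℕ) = (a : ℕ) + j := Nat.add_comm _ _
              have e2 : j + 1 + (a : ℕ) = (a : ℕ) + j + 1 := by omega
              have e3 : ((-1 : k)) ^ (j + 1) = -((-1 : k) ^ j) := by
                rw [pow_succ, mul_neg_one]
              rw [e1, e2, smul_add, e3, neg_smul, sub_neg_eq_add]
            rw [Finset.sum_congr rfl this, Finset.sum_range_sub']
            rw [hF]
            simp only [Nat.zero_add, pow_zero, one_smul]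
            have : (d - (a : ℕ)) + (a : ℕ) = d := Nat.sub_add_cancel (le_of_lt had)
            rw [this, hdker, smul_zero, sub_zero, hg]
            simp [had]
          · have : d - (a : ℕ) = 0 := Nat.sub_eq_zero_of_le (Nat.le_of_not_lt had)
            rw [this, hg]
            simp [had]
  refine Finset.sum_congr rfl fun a _ => ?_
  rw [← TensorProduct.sum_tmul, key a]
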